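/- Let A: H1 → H2 be a non-compact bounded operator between Hilbert spaces. Then there exists a bounded operator B: H2 → H1 such that 1 lies in the essential spectrum of A ∘ B. -/

import Mathlib

set_option maxHeartbeats 1000000

open scoped InnerProductSpace
section Aux

open Submodule ContinuousLinearMap Metric

variable {H1 H2 : Type*}
    [NormedAddCommGroup H1] [InnerProductSpace ℂ H1] [CompleteSpace H1]
    [NormedAddCommGroup H2] [InnerProductSpace ℂ H2] [CompleteSpace H2]

set_option linter.unusedSectionVars false

lemma myFinRankCompact (T : H1 →L[ℂ] H2)
    (h : FiniteDimensional ℂ (LinearMap.range (T : H1 →ₗ[ℂ] H2))) : IsCompactOperator ⇑T := by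
  set V := LinearMap.range (T : H1 →ₗ[ℂ] H2) with hV
  haveI := h
  haveI : ProperSpace V := FiniteDimensional.proper ℂ V
  let T' : H1 →L[ℂ] V := T.codRestrict V fun x => LinearMap.mem_range_self _ x
  refine ⟨Subtype.val '' closedBall (0 : V) ‖T'‖, (isCompact_closedBall _ _).image
    continuous_subtype_val, ?_⟩
  refine Filter.mem_of_superset (closedBall_mem_nhds (0 : H1) one_pos) fun x hx => ?_
  exact ⟨T' x, by
    simpa [mem_closedBall_zero_iff] using T'.unit_le_opNorm x (mem_closedBall_zero_iff.mp hx),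
    rfl⟩

lemma myExistsEps (A : H1 →L[ℂ] H2) (hA : ¬ IsCompactOperator ⇑A) :
    ∃ ε : ℝ, 0 < ε ∧ ∀ V : Submodule ℂ H1, FiniteDimensional ℂ V →
      ∃ x, x ∈ Vᗮ ∧ ‖x‖ = 1 ∧ ε ≤ ‖A x‖ := by
  by_contra hc
  push_neg at hc
  apply hA
  have key : ∀ ε : ℝ, 0 < ε → ∃ K : H1 →L[ℂ] H2, IsCompactOperator ⇑K ∧ ‖A - K‖ ≤ ε := by
    intro ε hε
    obtain ⟨V, hV, hsmall⟩ := hc ε hε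
    haveI := hV
    haveI : CompleteSpace V := FiniteDimensional.complete ℂ V
    set P := orthogonalProjection V with hP
    set K : H1 →L[ℂ] H2 := A.comp (V.subtypeL.comp P) with hK
    have hbound : ∀ y : H1, y ∈ Vᗮ → ‖A y‖ ≤ ε * ‖y‖ := by
      intro y hy
      rcases eq_or_ne y 0 with rfl | hy0
      · simp
      · have hn : ‖y‖ ≠ 0 := norm_ne_zero_iff.mpr hy0
        have hu : ((‖y‖ : ℂ)⁻¹ • y) ∈ Vᗮ := Submodule.smul_mem _ _ hy
        have hnu : ‖(‖y‖ : ℂ)⁻¹ • y‖ = 1 := by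
          rw [norm_smul]
          simp [hn]
        have := hsmall _ hu hnu
        rw [map_smul, norm_smul] at this
        have h2 : ‖((‖y‖ : ℂ)⁻¹)‖ = ‖y‖⁻¹ := by simp
        rw [h2] at this
        have := le_of_lt this
        have hn2 : 0 < ‖y‖ := norm_pos_iff.mpr hy0
        have : ‖A y‖ = ‖y‖ * (‖y‖⁻¹ * ‖A y‖) := by field_simp
        rw [this]
        nlinarith [inv_nonneg.mpr (norm_nonneg y)]
    refine ⟨K, ?_, ?_⟩
    · apply myFinRankCompact
      have hle : LinearMap.range (K : H1 →ₗ[ℂ] H2) ≤ V.map A.toLinearMap := by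
        rintro _ ⟨x, rfl⟩
        exact ⟨P x, SetLike.coe_mem _, rfl⟩
      haveI : FiniteDimensional ℂ (V.map A.toLinearMap) := inferInstance
      exact Submodule.finiteDimensional_of_le hle
    · refine opNorm_le_bound _ hε.le fun x => ?_
      have hx : (A - K) x = A (x - (P x : H1)) := by
        simp [hK, sub_apply, map_sub]
      have hmem : x - (P x : H1) ∈ Vᗮ := sub_starProjection_mem_orthogonal (K := V) x
      have hxle : ‖x - (P x : H1)‖ ≤ ‖x‖ := by
        rw [show x - (P x : H1) = ((orthogonalProjection Vᗮ x : Vᗮ) : H1) from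
          (starProjection_orthogonal_val (K := V) x).symm, Submodule.norm_coe]
        have h1 := (orthogonalProjection Vᗮ).le_opNorm x
        have h2 := orthogonalProjection_norm_le Vᗮ
        nlinarith [norm_nonneg x]
      have h3 : ‖A (x - (P x : H1))‖ ≤ ε * ‖x - (P x : H1)‖ := hbound _ hmem
      rw [hx]
      nlinarith
  choose K hKc hKle using fun n : ℕ => key (1 / (n + 1)) (by positivity)
  have htend : Filter.Tendsto K Filter.atTop (nhds A) := by
    rw [tendsto_iff_norm_sub_tendsto_zero]
    refine squeeze_zero (fun n => norm_nonneg _) (fun n => ?_)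
      tendsto_one_div_add_atTop_nhds_zero_nat
    rw [← norm_neg, neg_sub]
    exact hKle n
  exact isCompactOperator_of_tendsto htend (Filter.Eventually.of_forall hKc)

lemma myExistsSeq (A : H1 →L[ℂ] H2) {ε : ℝ}
    (h : ∀ V : Submodule ℂ H1, FiniteDimensional ℂ V →
      ∃ x, x ∈ Vᗮ ∧ ‖x‖ = 1 ∧ ε ≤ ‖A x‖) :
    ∃ e : ℕ → H1, Orthonormal ℂ e ∧ (∀ n, ε ≤ ‖A (e n)‖) ∧
      ∀ m n, m ≠ n → ⟪A (e m), A (e n)⟫_ℂ = 0 := by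
  classical
  let F : {V : Submodule ℂ H1 // FiniteDimensional ℂ V} → H1 := fun P => (h P.1 P.2).choose
  let step : {V : Submodule ℂ H1 // FiniteDimensional ℂ V} →
      {V : Submodule ℂ H1 // FiniteDimensional ℂ V} := fun P =>
    ⟨P.1 ⊔ span ℂ {F P, (ContinuousLinearMap.adjoint A) (A (F P))}, by
      haveI := P.2
      haveI : FiniteDimensional ℂ (span ℂ {F P, (ContinuousLinearMap.adjoint A) (A (F P))}) :=
        FiniteDimensional.span_of_finite ℂ (Set.toFinite _)
      infer_instance⟩
  let p : ℕ → {V : Submodule ℂ H1 // FiniteDimensional ℂ V} :=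
    fun n => step^[n] ⟨⊥, inferInstance⟩
  let e : ℕ → H1 := fun n => F (p n)
  have hspec : ∀ n, e n ∈ (p n).1ᗮ ∧ ‖e n‖ = 1 ∧ ε ≤ ‖A (e n)‖ :=
    fun n => (h (p n).1 (p n).2).choose_spec
  have hpsucc : ∀ n, p (n + 1) = step (p n) := fun n => Function.iterate_succ_apply' step n _
  have hmono : Monotone fun n => (p n).1 := by
    apply monotone_nat_of_le_succ
    intro n
    rw [hpsucc n]
    exact le_sup_left
  have hmem : ∀ k n, k < n →
      e k ∈ (p n).1 ∧ (ContinuousLinearMap.adjoint A) (A (e k)) ∈ (p n).1 := by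
    intro k n hkn
    have h1 : e k ∈ (p (k + 1)).1 := by
      rw [hpsucc k]
      exact Submodule.mem_sup_right (subset_span (by simp [e]))
    have h2 : (ContinuousLinearMap.adjoint A) (A (e k)) ∈ (p (k + 1)).1 := by
      rw [hpsucc k]
      exact Submodule.mem_sup_right (subset_span (by simp [e]))
    exact ⟨hmono hkn h1, hmono hkn h2⟩
  have horthE : ∀ k n, k < n → ⟪e k, e n⟫_ℂ = 0 := by
    intro k n hkn
    exact (Submodule.mem_orthogonal _ _).mp (hspec n).1 _ (hmem k n hkn).1
  have horthA : ∀ k n, k < n → ⟪A (e k), A (e n)⟫_ℂ = 0 := by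
    intro k n hkn
    have := (Submodule.mem_orthogonal _ _).mp (hspec n).1 _ (hmem k n hkn).2
    rwa [ContinuousLinearMap.adjoint_inner_left] at this
  refine ⟨e, ⟨fun n => (hspec n).2.1, fun m n hmn => ?_⟩, fun n => (hspec n).2.2,
    fun m n hmn => ?_⟩
  · rcases lt_or_gt_of_ne hmn with h' | h'
    · exact horthE m n h'
    · rw [← inner_conj_symm, horthE n m h', map_zero]
  · rcases lt_or_gt_of_ne hmn with h' | h'
    · exact horthA m n h'
    · rw [← inner_conj_symm, horthA n m h', map_zero]

lemma myB (A : H1 →L[ℂ] H2) {ε : ℝ} (hε : 0 < ε) (e : ℕ → H1)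
    (he : Orthonormal ℂ e) (heA : ∀ n, ε ≤ ‖A (e n)‖)
    (horthA : ∀ m n, m ≠ n → ⟪A (e m), A (e n)⟫_ℂ = 0) :
    ∃ B : H2 →L[ℂ] H1, ∀ k, B (A (e k)) = e k := by
  classical
  have hapos : ∀ n, 0 < ‖A (e n)‖ := fun n => lt_of_lt_of_le hε (heA n)
  set c : H2 → ℕ → ℂ := fun f n => ⟪A (e n), f⟫_ℂ / ((‖A (e n)‖ : ℂ) ^ 2) with hc_def
  set g : ℕ → H2 := fun n => (‖A (e n)‖ : ℂ)⁻¹ • A (e n) with hg_def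
  have hg : Orthonormal ℂ g := by
    constructor
    · intro n
      simp only [hg_def, norm_smul, norm_inv, Complex.norm_real, Real.norm_eq_abs,
        abs_of_pos (hapos n)]
      exact inv_mul_cancel₀ (hapos n).ne'
    · intro m n hmn
      simp only [hg_def, inner_smul_left, inner_smul_right, horthA m n hmn, mul_zero]
  have hcg : ∀ f n, ‖c f n‖ = ‖⟪g n, f⟫_ℂ‖ / ‖A (e n)‖ := by
    intro f n
    simp only [hc_def, hg_def, inner_smul_left]
    simp only [norm_div, norm_mul, map_inv₀, Complex.conj_ofReal, norm_inv, Complex.norm_real,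
      Real.norm_eq_abs, abs_of_pos (hapos n), norm_pow]
    field_simp
  have hcle : ∀ f n, ‖c f n‖ ^ 2 ≤ ε⁻¹ ^ 2 * ‖⟪g n, f⟫_ℂ‖ ^ 2 := by
    intro f n
    rw [hcg, div_pow]
    have h1 : ‖⟪g n, f⟫_ℂ‖ ^ 2 / ‖A (e n)‖ ^ 2 ≤ ‖⟪g n, f⟫_ℂ‖ ^ 2 / ε ^ 2 := by
      gcongr
      exact heA n
    calc ‖⟪g n, f⟫_ℂ‖ ^ 2 / ‖A (e n)‖ ^ 2 ≤ ‖⟪g n, f⟫_ℂ‖ ^ 2 / ε ^ 2 := h1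
      _ = ε⁻¹ ^ 2 * ‖⟪g n, f⟫_ℂ‖ ^ 2 := by rw [div_eq_mul_inv, ← inv_pow, mul_comm]
  have hsq : ∀ f, Summable fun n => ‖c f n‖ ^ 2 := fun f =>
    Summable.of_nonneg_of_le (fun n => by positivity) (hcle f)
      ((hg.inner_products_summable f).mul_left _)
  have hsum : ∀ f, Summable fun n => c f n • e n := by
    intro f
    have := (he.orthogonalFamily.summable_iff_norm_sq_summable (fun n => c f n)).mpr (hsq f)
    simpa only [LinearIsometry.toSpanSingleton_apply] using this
  have hnorm_bound : ∀ f, ‖∑' n, c f n • e n‖ ≤ ε⁻¹ * ‖f‖ := by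
    intro f
    have hb : ∀ s : Finset ℕ, ‖∑ n ∈ s, c f n • e n‖ ≤ ε⁻¹ * ‖f‖ := by
      intro s
      have h1 : ‖∑ n ∈ s, c f n • e n‖ ^ 2 = ∑ n ∈ s, ‖c f n‖ ^ 2 := by
        have := he.orthogonalFamily.norm_sum (fun n => c f n) s
        simpa only [LinearIsometry.toSpanSingleton_apply] using this
      have h2 : ∑ n ∈ s, ‖c f n‖ ^ 2 ≤ ε⁻¹ ^ 2 * ‖f‖ ^ 2 := by
        calc ∑ n ∈ s, ‖c f n‖ ^ 2 ≤ ∑ n ∈ s, ε⁻¹ ^ 2 * ‖⟪g n, f⟫_ℂ‖ ^ 2 :=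
            Finset.sum_le_sum fun n _ => hcle f n
          _ = ε⁻¹ ^ 2 * ∑ n ∈ s, ‖⟪g n, f⟫_ℂ‖ ^ 2 := by rw [Finset.mul_sum]
          _ ≤ ε⁻¹ ^ 2 * ‖f‖ ^ 2 := by
              gcongr
              exact hg.sum_inner_products_le f
      have h3 : ‖∑ n ∈ s, c f n • e n‖ ^ 2 ≤ (ε⁻¹ * ‖f‖) ^ 2 := by
        rw [h1, mul_pow]
        exact h2
      have h4 : (0:ℝ) ≤ ε⁻¹ * ‖f‖ := by positivity
      nlinarith [norm_nonneg (∑ n ∈ s, c f n • e n)]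
    have htendsto : Filter.Tendsto (fun s : Finset ℕ => ‖∑ n ∈ s, c f n • e n‖)
        Filter.atTop (nhds ‖∑' n, c f n • e n‖) := Filter.Tendsto.norm (hsum f).hasSum
    exact le_of_tendsto htendsto (Filter.Eventually.of_forall hb)
  have hadd : ∀ f₁ f₂ n, c (f₁ + f₂) n • e n = c f₁ n • e n + c f₂ n • e n := by
    intro f₁ f₂ n
    simp only [hc_def, inner_add_right, add_div, add_smul]
  have hsmul : ∀ (s : ℂ) f n, c (s • f) n = s * c f n := by
    intro s f n
    simp only [hc_def, inner_smul_right, mul_div_assoc]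
  set B₀ : H2 →ₗ[ℂ] H1 :=
    { toFun := fun f => ∑' n, c f n • e n
      map_add' := by
        intro f₁ f₂
        rw [← Summable.tsum_add (hsum f₁) (hsum f₂)]
        exact tsum_congr fun n => hadd f₁ f₂ n
      map_smul' := by
        intro s f
        simp only [RingHom.id_apply]
        rw [← Summable.tsum_const_smul s (hsum f)]
        exact tsum_congr fun n => by rw [hsmul s f n, smul_smul]
    } with hB₀
  refine ⟨B₀.mkContinuous ε⁻¹ hnorm_bound, fun k => ?_⟩
  show ∑' n, c (A (e k)) n • e n = e k
  rw [tsum_eq_single k]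
  · have : c (A (e k)) k = 1 := by
      simp only [hc_def, inner_self_eq_norm_sq_to_K]
      refine div_self ?_
      simp [(hapos k).ne']
    rw [this, one_smul]
  · intro n hn
    have : c (A (e k)) n = 0 := by
      simp only [hc_def, horthA n k hn, zero_div]
    rw [this, zero_smul]

lemma myG (A : H1 →L[ℂ] H2) (e : ℕ → H1) (hapos : ∀ n, 0 < ‖A (e n)‖)
    (horthA : ∀ m n, m ≠ n → ⟪A (e m), A (e n)⟫_ℂ = 0) :
    Orthonormal ℂ (fun n => (‖A (e n)‖ : ℂ)⁻¹ • A (e n)) := by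
  constructor
  · intro n
    simp only [norm_smul, norm_inv, Complex.norm_real, Real.norm_eq_abs, abs_of_pos (hapos n)]
    exact inv_mul_cancel₀ (hapos n).ne'
  · intro m n hmn
    simp only [inner_smul_left, inner_smul_right, horthA m n hmn, mul_zero]

end Aux

/-- A bounded operator is *Fredholm* if its kernel is finite-dimensional and its range is
closed of finite codimension. -/
def IsFredholm {E F : Type*} [NormedAddCommGroup E] [NormedAddCommGroup F]
    [NormedSpace ℂ E] [NormedSpace ℂ F] (T : E →L[ℂ] F) : Prop :=
  FiniteDimensional ℂ (LinearMap.ker (T : E →ₗ[ℂ] F)) ∧ IsClosed (LinearMap.range (T : E →ₗ[ℂ] F) : Set F) ∧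
    FiniteDimensional ℂ (F ⧸ LinearMap.range (T : E →ₗ[ℂ] F))

/-- For a non-compact bounded operator `A : H1 → H2` between Hilbert spaces there is a bounded
operator `B : H2 → H1` such that `1` lies in the essential spectrum of `A ∘ B`, i.e.
`1 - A ∘ B` is not Fredholm. -/
theorem stmt6 {H1 H2 : Type*}
    [NormedAddCommGroup H1] [InnerProductSpace ℂ H1] [CompleteSpace H1]
    [NormedAddCommGroup H2] [InnerProductSpace ℂ H2] [CompleteSpace H2]
    (A : H1 →L[ℂ] H2) (hA : ¬ IsCompactOperator ⇑A) :
    ∃ B : H2 →L[ℂ] H1, ¬ IsFredholm ((1 : H2 →L[ℂ] H2) - A.comp B) := by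
  obtain ⟨ε, hε, h⟩ := myExistsEps A hA
  obtain ⟨e, he, heA, horthA⟩ := myExistsSeq A h
  obtain ⟨B, hB⟩ := myB A hε e he heA horthA
  refine ⟨B, ?_⟩
  rintro ⟨hker, -, -⟩
  set T := (1 : H2 →L[ℂ] H2) - A.comp B with hT
  have hmem : ∀ k, A (e k) ∈ LinearMap.ker (T : H2 →ₗ[ℂ] H2) := by
    intro k
    rw [LinearMap.mem_ker]
    show ((1 : H2 →L[ℂ] H2) - A.comp B) (A (e k)) = 0
    rw [ContinuousLinearMap.sub_apply, ContinuousLinearMap.one_apply,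
      ContinuousLinearMap.comp_apply, hB k, sub_self]
  have hapos : ∀ n, 0 < ‖A (e n)‖ := fun n => lt_of_lt_of_le hε (heA n)
  have hg := myG A e hapos horthA
  have hli : LinearIndependent ℂ (fun n => A (e n)) := by
    have h1 := hg.linearIndependent.units_smul
      (fun n => Units.mk0 ((‖A (e n)‖ : ℂ)) (by exact_mod_cast (hapos n).ne'))
    have h2 : (fun n => A (e n)) = (fun n => Units.mk0 ((‖A (e n)‖ : ℂ))
        (by exact_mod_cast (hapos n).ne') : ℕ → ℂˣ) • fun n => (‖A (e n)‖ : ℂ)⁻¹ • A (e n) := by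
      funext n
      show A (e n) = (‖A (e n)‖ : ℂ) • ((‖A (e n)‖ : ℂ)⁻¹ • A (e n))
      rw [smul_smul, mul_inv_cancel₀ (by exact_mod_cast (hapos n).ne'), one_smul]
    rw [h2]
    exact h1
  have hli2 : LinearIndependent ℂ
      (fun k => (⟨A (e k), hmem k⟩ : LinearMap.ker (T : H2 →ₗ[ℂ] H2))) := by
    apply hli.of_comp (LinearMap.ker (T : H2 →ₗ[ℂ] H2)).subtype
  haveI := hker
  exact Module.Finite.not_linearIndependent_of_infinite _ hli2
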